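/- Let n ≥ 5, let C be the (n−1)×(n−1) circulant matrix circ(1,0,…,0,−1), X = (CCᵀ + I_{n−1})⁻¹(J_{n−1} − n·I_{n−1}), and Y = −CᵀX. Then Y equals the circulant matrix circ(d_0, d_1, …, d_{n−2}) where d_0 = (2n/√5) · [ ((3+√5)^{n−2} − 2^{n−2}) / (2^{n−1} − (3+√5)^{n−1}) − ((3−√5)^{n−2} − 2^{n−2}) / (2^{n−1} − (3−√5)^{n−1}) ], and for 1 ≤ j ≤ n−2, d_j = −(n·2^{n−j}/(5+√5)) · [ (3+√5)^j / (2^{n−1} − (3+√5)^{n−1}) + 2(3−√5)^{j−1} / (2^{n−1} − (3−√5)^{n−1}) ]. -/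

import Mathlib

open Matrix

set_option maxRecDepth 10000
set_option maxHeartbeats 1000000

noncomputable section

/-- The circulant matrix of order `m` with defining vector `v`:
its `(i,j)` entry is `v ((j - i) mod m)`. -/
def circ {m : ℕ} (v : Fin m → ℝ) : Matrix (Fin m) (Fin m) ℝ :=
  Matrix.of fun i j => v (j - i)

/-- The `m × m` all-ones matrix. -/
def Jmat (m : ℕ) : Matrix (Fin m) (Fin m) ℝ := Matrix.of fun _ _ => 1

lemma circ_mul {m : ℕ} [NeZero m] (u v : Fin m → ℝ) :
    circ u * circ v = circ (fun t => ∑ j, u j * v (t - j)) := by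
  ext i j
  simp only [circ, Matrix.mul_apply, Matrix.of_apply]
  rw [← Equiv.sum_comp (Equiv.addLeft i)]
  apply Finset.sum_congr rfl
  intro x _
  simp only [Equiv.coe_addLeft]
  congr 1
  · congr 1; abel
  · congr 1; abel

lemma conv_comm {m : ℕ} [NeZero m] (u v : Fin m → ℝ) (t : Fin m) :
    ∑ j, u j * v (t - j) = ∑ j, v j * u (t - j) := by
  rw [← Equiv.sum_comp (Equiv.subLeft t)]
  apply Finset.sum_congr rfl
  intro x _
  simp only [Equiv.subLeft_apply, sub_sub_cancel]
  ring

lemma circ_mul_comm {m : ℕ} [NeZero m] (u v : Fin m → ℝ) :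
    circ u * circ v = circ v * circ u := by
  rw [circ_mul, circ_mul]
  exact congrArg circ (funext fun t => conv_comm u v t)

lemma circ_transpose {m : ℕ} [NeZero m] (v : Fin m → ℝ) :
    (circ v)ᵀ = circ (fun k => v (-k)) := by
  ext i j; simp only [circ, Matrix.transpose_apply, Matrix.of_apply, neg_sub]

lemma circ_one {m : ℕ} [NeZero m] :
    (1 : Matrix (Fin m) (Fin m) ℝ) = circ (fun k => if k = 0 then 1 else 0) := by
  ext i j
  simp only [circ, Matrix.one_apply, Matrix.of_apply, sub_eq_zero]
  by_cases h : i = j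
  · simp [h]
  · rw [if_neg h, if_neg (fun h' : j = i => h h'.symm)]

lemma circ_add {m : ℕ} (u v : Fin m → ℝ) :
    circ u + circ v = circ (fun t => u t + v t) := by
  ext i j; simp [circ]

lemma circ_smul {m : ℕ} (r : ℝ) (v : Fin m → ℝ) :
    r • circ v = circ (fun t => r * v t) := by
  ext i j; simp [circ]

lemma sum_delta_mul {m : ℕ} [NeZero m] (c : Fin m) (g : Fin m → ℝ) :
    ∑ j, (if j = c then (1:ℝ) else 0) * g j = g c := by
  simp [ite_mul]

lemma conv_two {m : ℕ} [NeZero m] (c1 c2 : Fin m) (g : Fin m → ℝ) (t : Fin m) :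
    ∑ j, ((if j = c1 then (1:ℝ) else 0) - (if j = c2 then 1 else 0)) * g (t - j)
      = g (t - c1) - g (t - c2) := by
  simp only [sub_mul, Finset.sum_sub_distrib]
  rw [sum_delta_mul c1 (fun j => g (t - j)), sum_delta_mul c2 (fun j => g (t - j))]

lemma conv_three {m : ℕ} [NeZero m] (c1 c2 : Fin m) (g : Fin m → ℝ) (t : Fin m) :
    ∑ j, (3 * (if j = 0 then (1:ℝ) else 0) - (if j = c1 then 1 else 0)
        - (if j = c2 then 1 else 0)) * g (t - j)
      = 3 * g t - g (t - c1) - g (t - c2) := by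
  simp only [sub_mul, mul_assoc, Finset.sum_sub_distrib, ← Finset.mul_sum]
  rw [sum_delta_mul 0 (fun j => g (t - j)), sum_delta_mul c1 (fun j => g (t - j)),
    sum_delta_mul c2 (fun j => g (t - j)), sub_zero]


/-- the entry vector -/
def dvec (n : ℕ) : Fin (n-1) → ℝ := fun j : Fin (n-1) =>
      if j.val = 0 then
        (2 * (n:ℝ) / Real.sqrt 5) * (((3 + Real.sqrt 5) ^ (n-2) - (2:ℝ) ^ (n-2)) / ((2:ℝ) ^ (n-1) - (3 + Real.sqrt 5) ^ (n-1)) - ((3 - Real.sqrt 5) ^ (n-2) - (2:ℝ) ^ (n-2)) / ((2:ℝ) ^ (n-1) - (3 - Real.sqrt 5) ^ (n-1)))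
      else
        -((n:ℝ) * (2:ℝ) ^ (n-j.val) / (5 + Real.sqrt 5)) * ((3 + Real.sqrt 5) ^ j.val / ((2:ℝ) ^ (n-1) - (3 + Real.sqrt 5) ^ (n-1)) + 2 * (3 - Real.sqrt 5) ^ (j.val - 1) / ((2:ℝ) ^ (n-1) - (3 - Real.sqrt 5) ^ (n-1)))



def Dd (n : ℕ) (j : ℕ) : ℝ :=
      if j = 0 then
        (2 * (n:ℝ) / Real.sqrt 5) * (((3 + Real.sqrt 5) ^ (n-2) - (2:ℝ) ^ (n-2)) / ((2:ℝ) ^ (n-1) - (3 + Real.sqrt 5) ^ (n-1)) - ((3 - Real.sqrt 5) ^ (n-2) - (2:ℝ) ^ (n-2)) / ((2:ℝ) ^ (n-1) - (3 - Real.sqrt 5) ^ (n-1)))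
      else
        -((n:ℝ) * (2:ℝ) ^ (n-j) / (5 + Real.sqrt 5)) * ((3 + Real.sqrt 5) ^ j / ((2:ℝ) ^ (n-1) - (3 + Real.sqrt 5) ^ (n-1)) + 2 * (3 - Real.sqrt 5) ^ (j - 1) / ((2:ℝ) ^ (n-1) - (3 - Real.sqrt 5) ^ (n-1)))

lemma sfacts : (Real.sqrt 5)^2 = 5 ∧ 1 < Real.sqrt 5 ∧ Real.sqrt 5 < 3 := by
  have h1 : (Real.sqrt 5)^2 = 5 := Real.sq_sqrt (by norm_num)
  have h0 : 0 ≤ Real.sqrt 5 := Real.sqrt_nonneg 5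
  refine ⟨h1, by nlinarith, by nlinarith⟩

lemma denoms (n : ℕ) (hn : 5 ≤ n) :
    (2:ℝ) ^ (n-1) - (3 + Real.sqrt 5) ^ (n-1) ≠ 0 ∧
    (2:ℝ) ^ (n-1) - (3 - Real.sqrt 5) ^ (n-1) ≠ 0 := by
  obtain ⟨h1, h2, h3⟩ := sfacts
  constructor
  · refine ne_of_lt (sub_neg.mpr ?_)
    exact pow_lt_pow_left₀ (by linarith) (by norm_num) (by omega)
  · refine ne_of_gt (sub_pos.mpr ?_)
    exact pow_lt_pow_left₀ (by linarith) (by linarith) (by omega)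

lemma s5red :
    Real.sqrt 5 ^ 2 = (5:ℝ)^1 ∧
    Real.sqrt 5 ^ 3 = (5:ℝ)^1 * Real.sqrt 5 ∧
    Real.sqrt 5 ^ 4 = (5:ℝ)^2 ∧
    Real.sqrt 5 ^ 5 = (5:ℝ)^2 * Real.sqrt 5 ∧
    Real.sqrt 5 ^ 6 = (5:ℝ)^3 ∧
    Real.sqrt 5 ^ 7 = (5:ℝ)^3 * Real.sqrt 5 ∧
    Real.sqrt 5 ^ 8 = (5:ℝ)^4 ∧
    Real.sqrt 5 ^ 9 = (5:ℝ)^4 * Real.sqrt 5 ∧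
    Real.sqrt 5 ^ 10 = (5:ℝ)^5 ∧
    Real.sqrt 5 ^ 11 = (5:ℝ)^5 * Real.sqrt 5 ∧
    Real.sqrt 5 ^ 12 = (5:ℝ)^6 ∧
    Real.sqrt 5 ^ 13 = (5:ℝ)^6 * Real.sqrt 5 ∧
    Real.sqrt 5 ^ 14 = (5:ℝ)^7 ∧
    Real.sqrt 5 ^ 15 = (5:ℝ)^7 * Real.sqrt 5 ∧
    Real.sqrt 5 ^ 16 = (5:ℝ)^8 ∧
    Real.sqrt 5 ^ 17 = (5:ℝ)^8 * Real.sqrt 5 ∧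
    Real.sqrt 5 ^ 18 = (5:ℝ)^9 ∧
    Real.sqrt 5 ^ 19 = (5:ℝ)^9 * Real.sqrt 5 ∧
    Real.sqrt 5 ^ 20 = (5:ℝ)^10 ∧
    Real.sqrt 5 ^ 21 = (5:ℝ)^10 * Real.sqrt 5 ∧
    Real.sqrt 5 ^ 22 = (5:ℝ)^11 ∧
    Real.sqrt 5 ^ 23 = (5:ℝ)^11 * Real.sqrt 5 ∧
    Real.sqrt 5 ^ 24 = (5:ℝ)^12 ∧
    Real.sqrt 5 ^ 25 = (5:ℝ)^12 * Real.sqrt 5 ∧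
    Real.sqrt 5 ^ 26 = (5:ℝ)^13 ∧
    Real.sqrt 5 ^ 27 = (5:ℝ)^13 * Real.sqrt 5 ∧
    Real.sqrt 5 ^ 28 = (5:ℝ)^14 ∧
    Real.sqrt 5 ^ 29 = (5:ℝ)^14 * Real.sqrt 5 ∧
    Real.sqrt 5 ^ 30 = (5:ℝ)^15 ∧
    Real.sqrt 5 ^ 31 = (5:ℝ)^15 * Real.sqrt 5 ∧
    Real.sqrt 5 ^ 32 = (5:ℝ)^16 ∧
    Real.sqrt 5 ^ 33 = (5:ℝ)^16 * Real.sqrt 5 ∧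
    Real.sqrt 5 ^ 34 = (5:ℝ)^17 ∧
    Real.sqrt 5 ^ 35 = (5:ℝ)^17 * Real.sqrt 5 ∧
    Real.sqrt 5 ^ 36 = (5:ℝ)^18 ∧
    Real.sqrt 5 ^ 37 = (5:ℝ)^18 * Real.sqrt 5 ∧
    Real.sqrt 5 ^ 38 = (5:ℝ)^19 ∧
    Real.sqrt 5 ^ 39 = (5:ℝ)^19 * Real.sqrt 5 ∧
    Real.sqrt 5 ^ 40 = (5:ℝ)^20 := by
  have h : ∀ k : ℕ, Real.sqrt 5 ^ (2*k) = (5:ℝ)^k := fun k => by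
    rw [pow_mul, Real.sq_sqrt (by norm_num)]
  refine ⟨h 1, by rw [pow_succ, h 1], h 2, by rw [pow_succ, h 2], h 3, by rw [pow_succ, h 3], h 4, by rw [pow_succ, h 4], h 5, by rw [pow_succ, h 5], h 6, by rw [pow_succ, h 6], h 7, by rw [pow_succ, h 7], h 8, by rw [pow_succ, h 8], h 9, by rw [pow_succ, h 9], h 10, by rw [pow_succ, h 10], h 11, by rw [pow_succ, h 11], h 12, by rw [pow_succ, h 12], h 13, by rw [pow_succ, h 13], h 14, by rw [pow_succ, h 14], h 15, by rw [pow_succ, h 15], h 16, by rw [pow_succ, h 16], h 17, by rw [pow_succ, h 17], h 18, by rw [pow_succ, h 18], h 19, by rw [pow_succ, h 19], h 20⟩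

lemma caseA (n : ℕ) (hn : 5 ≤ n) : 3 * Dd n 0 - Dd n (n-2) - Dd n 1 = n := by
  obtain ⟨hs, hs1, hs3⟩ := sfacts
  obtain ⟨hDP, hDQ⟩ := denoms n hn
  have h5 : (5:ℝ) + Real.sqrt 5 ≠ 0 := by nlinarith
  have hs0 : Real.sqrt 5 ≠ 0 := by nlinarith
  rw [Dd, Dd, Dd, if_pos rfl, if_neg (by omega : ¬ n - 2 = 0), if_neg (by omega : ¬ 1 = 0)]
  rw [show n - (n-2) = 2 by omega, show n - 2 - 1 = n - 3 by omega, show 1 - 1 = 0 by omega,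
    show n - 2 = (n-3) + 1 by omega]
  rw [show n - 1 = (n-3) + 2 by omega] at hDP hDQ ⊢
  field_simp
  ring_nf
  simp only [s5red]
  ring_nf

lemma caseB (n : ℕ) (hn : 5 ≤ n) : 3 * Dd n 1 - Dd n 0 - Dd n 2 = -n := by
  obtain ⟨hs, hs1, hs3⟩ := sfacts
  obtain ⟨hDP, hDQ⟩ := denoms n hn
  have h5 : (5:ℝ) + Real.sqrt 5 ≠ 0 := by nlinarith
  have hs0 : Real.sqrt 5 ≠ 0 := by nlinarith
  rw [Dd, Dd, Dd, if_pos rfl, if_neg (by omega : ¬ 1 = 0), if_neg (by omega : ¬ 2 = 0)]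
  rw [show (1:ℕ) - 1 = 0 by omega, show (2:ℕ) - 1 = 1 by omega,
    show n - 2 = (n-3) + 1 by omega]
  rw [show n - 1 = (n-3) + 2 by omega] at hDP hDQ ⊢
  field_simp
  ring_nf
  simp only [s5red]
  ring_nf

lemma caseC (n : ℕ) (hn : 5 ≤ n) : 3 * Dd n (n-2) - Dd n (n-3) - Dd n 0 = 0 := by
  obtain ⟨hs, hs1, hs3⟩ := sfacts
  obtain ⟨hDP, hDQ⟩ := denoms n hn
  have h5 : (5:ℝ) + Real.sqrt 5 ≠ 0 := by nlinarith
  have hs0 : Real.sqrt 5 ≠ 0 := by nlinarith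
  rw [Dd, Dd, Dd, if_pos rfl, if_neg (by omega : ¬ n - 2 = 0), if_neg (by omega : ¬ n - 3 = 0)]
  rw [show n - (n-2) = 2 by omega, show n - (n-3) = 3 by omega,
    show n - 2 - 1 = (n-4) + 1 by omega, show n - 3 - 1 = n - 4 by omega,
    show n - 3 = (n-4) + 1 by omega,
    show n - 2 = (n-4) + 2 by omega]
  rw [show n - 1 = (n-4) + 3 by omega] at hDP hDQ ⊢
  field_simp
  ring_nf
  simp only [s5red]
  ring_nf

lemma caseD (n : ℕ) (hn : 5 ≤ n) (j : ℕ) (hj2 : 2 ≤ j) (hj3 : j ≤ n - 3) :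
    3 * Dd n j - Dd n (j-1) - Dd n (j+1) = 0 := by
  obtain ⟨hs, hs1, hs3⟩ := sfacts
  obtain ⟨hDP, hDQ⟩ := denoms n hn
  have h5 : (5:ℝ) + Real.sqrt 5 ≠ 0 := by nlinarith
  have hs0 : Real.sqrt 5 ≠ 0 := by nlinarith
  obtain ⟨c, rfl⟩ : ∃ c, j = c + 2 := ⟨j - 2, by omega⟩
  obtain ⟨e, he⟩ : ∃ e, e = n - c - 3 := ⟨n - c - 3, rfl⟩
  rw [Dd, Dd, Dd, if_neg (by omega : ¬ c + 2 = 0), if_neg (by omega : ¬ c + 2 - 1 = 0),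
    if_neg (by omega : ¬ c + 2 + 1 = 0)]
  rw [show c + 2 - 1 = c + 1 by omega, show c + 2 + 1 = c + 3 by omega]
  rw [show n - (c+2) = e+1 by omega, show n - (c+1) = e+2 by omega,
    show n - (c+3) = e by omega,
    show c + 1 - 1 = c by omega, show c + 3 - 1 = c + 2 by omega]
  field_simp
  ring_nf
  simp only [s5red]
  ring_nf
lemma key_identity (n : ℕ) (hn : 5 ≤ n) [NeZero (n-1)] (t : Fin (n-1)) :
    3 * dvec n t - dvec n (t - ⟨1, by omega⟩) - dvec n (t + ⟨1, by omega⟩)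
      = n * ((if t = 0 then (1:ℝ) else 0) - (if t = ⟨1, by omega⟩ then 1 else 0)) := by
  have hdd : ∀ x : Fin (n-1), dvec n x = Dd n x.val := fun x => rfl
  have hadd : (t + (⟨1, by omega⟩ : Fin (n-1))).val = (t.val + 1) % (n-1) := by
    rw [Fin.val_add]
  have hsub : (t - (⟨1, by omega⟩ : Fin (n-1))).val = ((n-1-1) + t.val) % (n-1) := by
    rw [Fin.sub_def]
  have e0 : (if t = 0 then (1:ℝ) else 0) = if t.val = 0 then 1 else 0 := by
    rcases eq_or_ne t 0 with h | h
    · rw [if_pos h, if_pos (by rw [h]; rfl)]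
    · rw [if_neg h, if_neg (fun hv => h (Fin.ext (by rw [hv]; rfl)))]
  have e1 : (if t = (⟨1, by omega⟩ : Fin (n-1)) then (1:ℝ) else 0) = if t.val = 1 then 1 else 0 := by
    rcases eq_or_ne t ⟨1, by omega⟩ with h | h
    · rw [if_pos h, if_pos (by rw [h])]
    · rw [if_neg h, if_neg (fun hv => h (Fin.ext hv))]
  rw [hdd, hdd, hdd, hadd, hsub, e0, e1, show n - 1 - 1 = n - 2 by omega]
  by_cases h0 : t.val = 0
  · rw [h0, show (0 + 1) % (n-1) = 1 by rw [Nat.zero_add]; exact Nat.mod_eq_of_lt (by omega),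
      show ((n-2) + 0) % (n-1) = n-2 by rw [Nat.add_zero]; exact Nat.mod_eq_of_lt (by omega)]
    norm_num
    exact caseA n hn
  · by_cases h1 : t.val = 1
    · rw [h1, show (1 + 1) % (n-1) = 2 from Nat.mod_eq_of_lt (by omega),
        show ((n-2) + 1) % (n-1) = 0 by rw [show (n-2) + 1 = n-1 by omega, Nat.mod_self]]
      norm_num
      exact caseB n hn
    · by_cases h2 : t.val = n - 2
      · rw [h2, show (n - 2 + 1) % (n-1) = 0 by rw [show n-2+1 = n-1 by omega, Nat.mod_self],
          show ((n-2) + (n-2)) % (n-1) = n - 3 by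
            rw [show n-2+(n-2) = (n-3) + (n-1) by omega, Nat.add_mod_right]
            exact Nat.mod_eq_of_lt (by omega)]
        rw [if_neg (by omega), if_neg (by omega)]
        rw [show (n:ℝ) * (0 - 0) = 0 by ring]
        exact caseC n hn
      · have hlt : t.val < n - 1 := t.isLt
        rw [show (t.val + 1) % (n-1) = t.val + 1 from Nat.mod_eq_of_lt (by omega),
          show ((n-2) + t.val) % (n-1) = t.val - 1 by
            rw [show (n-2) + t.val = (t.val - 1) + (n-1) by omega, Nat.add_mod_right]
            exact Nat.mod_eq_of_lt (by omega)]
        rw [if_neg h0, if_neg h1, show (n:ℝ) * (0 - 0) = 0 by ring]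
        exact caseD n hn t.val (by omega) (by omega)

theorem wheel_oriented_Y_entries (n : ℕ) (hn : 5 ≤ n)
    (C X Y : Matrix (Fin (n-1)) (Fin (n-1)) ℝ)
    (hC : C = circ (fun k => if k.val = 0 then (1:ℝ) else if k.val = n - 2 then -1 else 0))
    (hX : X = (C * Cᵀ + 1)⁻¹ * (Jmat (n-1) - (n:ℝ) • (1 : Matrix (Fin (n-1)) (Fin (n-1)) ℝ)))
    (hY : Y = -(Cᵀ * X)) :
    Y = circ (fun j : Fin (n-1) =>
      if j.val = 0 then
        (2 * (n:ℝ) / Real.sqrt 5) * (((3 + Real.sqrt 5) ^ (n-2) - (2:ℝ) ^ (n-2)) / ((2:ℝ) ^ (n-1) - (3 + Real.sqrt 5) ^ (n-1)) - ((3 - Real.sqrt 5) ^ (n-2) - (2:ℝ) ^ (n-2)) / ((2:ℝ) ^ (n-1) - (3 - Real.sqrt 5) ^ (n-1)))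
      else
        -((n:ℝ) * (2:ℝ) ^ (n-j.val) / (5 + Real.sqrt 5)) * ((3 + Real.sqrt 5) ^ j.val / ((2:ℝ) ^ (n-1) - (3 + Real.sqrt 5) ^ (n-1)) + 2 * (3 - Real.sqrt 5) ^ (j.val - 1) / ((2:ℝ) ^ (n-1) - (3 - Real.sqrt 5) ^ (n-1)))) := by
  haveI : NeZero (n-1) := ⟨by omega⟩
  set θ : Fin (n-1) := ⟨1, by omega⟩ with hθdef
  set ι : Fin (n-1) := ⟨n-2, by omega⟩ with hιdef
  have hθι : θ + ι = 0 := by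
    apply Fin.ext
    have h1 : (θ : ℕ) = 1 := rfl
    have h2 : (ι : ℕ) = n - 2 := rfl
    rw [Fin.val_add, h1, h2, Fin.val_zero, show 1 + (n-2) = n-1 by omega, Nat.mod_self]
  have hιθ : ι = -θ := by
    exact eq_neg_of_add_eq_zero_right hθι
  -- C as circulant of delta differences
  set u : Fin (n-1) → ℝ := fun k => (if k = 0 then (1:ℝ) else 0) - (if k = ι then 1 else 0) with hu
  set w : Fin (n-1) → ℝ := fun k => (if k = 0 then (1:ℝ) else 0) - (if k = θ then 1 else 0) with hw
  have hθ0 : θ ≠ 0 := by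
    simp only [hθdef, Ne, Fin.ext_iff, Fin.val_zero]; omega
  have hι0 : ι ≠ 0 := by
    simp only [hιdef, Ne, Fin.ext_iff, Fin.val_zero]; omega
  have hθι' : θ ≠ ι := by
    simp only [hθdef, hιdef, Ne, Fin.ext_iff]; omega
  have hCu : C = circ u := by
    rw [hC]
    apply congrArg circ
    funext k
    simp only [hu]
    have hv0 : ((0 : Fin (n-1)) : ℕ) = 0 := rfl
    have hvι : (ι : ℕ) = n - 2 := rfl
    by_cases h0 : (k : ℕ) = 0
    · have hk : k = 0 := Fin.ext (by rw [h0, hv0])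
      have hkι : k ≠ ι := fun h => by rw [hk] at h; exact hι0 h.symm
      rw [if_pos h0, if_pos hk, if_neg hkι, sub_zero]
    · have hk : k ≠ 0 := fun h => h0 (by rw [h, hv0])
      by_cases h2 : (k : ℕ) = n - 2
      · have hk2 : k = ι := Fin.ext (by rw [h2, hvι])
        rw [if_neg h0, if_pos h2, if_neg hk, if_pos hk2]
        norm_num
      · have hk2 : k ≠ ι := fun h => h2 (by rw [h, hvι])
        rw [if_neg h0, if_neg h2, if_neg hk, if_neg hk2, sub_zero]
  have hCt : Cᵀ = circ w := by
    rw [hCu, circ_transpose]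
    apply congrArg circ
    funext k
    have e1 : (-k = 0) ↔ (k = 0) := by
      constructor
      · intro h; simpa using congrArg Neg.neg h
      · intro h; simp [h]
    have e2 : (-k = ι) ↔ (k = θ) := by
      rw [hιθ, neg_inj]
    simp only [hu, hw, e1, e2]
  set a : Fin (n-1) → ℝ := fun k =>
    3 * (if k = 0 then (1:ℝ) else 0) - (if k = θ then 1 else 0) - (if k = ι then 1 else 0)
      with ha
  set A := C * Cᵀ + 1 with hAdef
  have hA : A = circ a := by
    rw [hAdef, hCt, hCu, circ_mul, circ_one, circ_add]
    apply congrArg circ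
    funext t
    rw [conv_two]
    have e1 : (t - (0 : Fin (n-1))) = t := by simp
    have e2 : (t - ι = 0) ↔ (t = ι) := sub_eq_zero
    have e3 : (t - ι = θ) ↔ (t = 0) := by
      rw [sub_eq_iff_eq_add, ← hθι]
    simp only [hw, ha, e1]
    rw [show (if t - ι = 0 then (1:ℝ) else 0) = (if t = ι then 1 else 0) by simp [e2],
      show (if t - ι = θ then (1:ℝ) else 0) = (if t = 0 then 1 else 0) by simp [e3]]
    ring
  set d := dvec n with hd
  set D := circ d with hD
  have hAD : A * D = (n : ℝ) • Cᵀ := by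
    rw [hA, hD, circ_mul, hCt, circ_smul]
    apply congrArg circ
    funext t
    rw [conv_three]
    have e4 : t - ι = t + θ := by rw [hιθ, sub_neg_eq_add]
    rw [e4]
    exact key_identity n hn t
  -- invertibility
  have hdet : A.det ≠ 0 := by
    apply det_ne_zero_of_sum_row_lt_diag
    intro i
    have hAa : ∀ j, A i j = a (j - i) := by
      intro j; rw [hA]; rfl
    have hdiag : A i i = 3 := by
      rw [hAa i, sub_self, ha]
      simp [hθ0.symm, hι0.symm]
    have hsum : ∑ j ∈ Finset.univ.erase i, ‖A i j‖ = 2 := by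
      rw [Finset.sum_congr rfl (fun j _ => by rw [hAa j])]
      rw [show (∑ j ∈ Finset.univ.erase i, ‖a (j - i)‖)
            = ∑ t ∈ Finset.univ.erase (0 : Fin (n-1)), ‖a t‖ from
        Finset.sum_nbij' (fun j => j - i) (fun t => t + i)
          (fun j hj => by
            simp only [Finset.mem_erase, Finset.mem_univ, and_true] at hj ⊢
            rw [Ne, sub_eq_zero]; exact hj)
          (fun t ht => by
            simp only [Finset.mem_erase, Finset.mem_univ, and_true] at ht ⊢
            intro h
            exact ht (by rwa [← sub_eq_zero, add_sub_cancel_right] at h))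
          (fun j _ => by simp) (fun t _ => by simp) (fun j _ => rfl)]
      -- now sum over t in erase 0 of ‖a t‖
      have : ∀ t ∈ Finset.univ.erase (0 : Fin (n-1)),
          ‖a t‖ = (if t = θ then (1:ℝ) else 0) + (if t = ι then 1 else 0) := by
        intro t ht
        simp only [Finset.mem_erase, Finset.mem_univ, and_true] at ht
        have hιθ'' : ι ≠ θ := fun h => hθι' h.symm
        simp only [ha, if_neg ht]
        by_cases h1 : t = θ
        · subst h1
          simp [hθι', Real.norm_eq_abs]
        · by_cases h2 : t = ι
          · subst h2
            simp [hιθ'', Real.norm_eq_abs]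
          · simp [h1, h2]
      rw [Finset.sum_congr rfl this, Finset.sum_add_distrib]
      rw [Finset.sum_ite_eq' (Finset.univ.erase 0) θ (fun _ => (1:ℝ)),
        Finset.sum_ite_eq' (Finset.univ.erase 0) ι (fun _ => (1:ℝ))]
      simp only [Finset.mem_erase, Finset.mem_univ, and_true, if_pos hθ0, if_pos hι0]
      norm_num
    rw [hsum, hdiag]
    norm_num
  have hunit : IsUnit A.det := isUnit_iff_ne_zero.mpr hdet
  -- commutation
  have hcomm : A * Cᵀ = Cᵀ * A := by
    rw [hA, hCt, circ_mul_comm]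
  have hswap : Cᵀ * A⁻¹ = A⁻¹ * Cᵀ := by
    calc Cᵀ * A⁻¹ = A⁻¹ * (A * (Cᵀ * A⁻¹)) :=
          (Matrix.nonsing_inv_mul_cancel_left _ _ hunit).symm
    _ = A⁻¹ * (Cᵀ * A * A⁻¹) := by rw [← Matrix.mul_assoc A Cᵀ A⁻¹, hcomm]
    _ = A⁻¹ * Cᵀ := by rw [Matrix.mul_nonsing_inv_cancel_right _ _ hunit]
  have hCJ : Cᵀ * Jmat (n-1) = 0 := by
    rw [hCt]
    ext i j
    simp only [circ, Jmat, Matrix.mul_apply, Matrix.of_apply, mul_one, Matrix.zero_apply]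
    rw [← Equiv.sum_comp (Equiv.addLeft i) (fun k => w (k - i))]
    simp only [Equiv.coe_addLeft, add_sub_cancel_left]
    simp [hw, Finset.sum_sub_distrib]
  -- final assembly
  have hCM : Cᵀ * (Jmat (n-1) - (n:ℝ) • 1) = -(A * D) := by
    rw [Matrix.mul_sub, hCJ, hAD, Matrix.mul_smul, Matrix.mul_one, zero_sub]
  have hfin : Cᵀ * (A⁻¹ * (Jmat (n-1) - (n:ℝ) • 1)) = -D := by
    rw [← Matrix.mul_assoc, hswap, Matrix.mul_assoc, hCM, Matrix.mul_neg,
      Matrix.nonsing_inv_mul_cancel_left _ _ hunit]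
  rw [hY, hX, hfin, neg_neg]
  rfl
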